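/- Let d ≥ 1, θ, ω ∈ 𝕋^b, and B, V : 𝕋^b → Mat(d,ℂ) with B(θ') invertible for all θ'. Then for every E ∈ ℂ and every n ≥ 1, the finite-volume periodic determinant satisfies |f_{E,n}(θ)| = |det(M_{n,E}(θ) − I_{2d})| · ∏_{j=0}^{n−1} |det B(θ+jω)|. -/

import Mathlib

noncomputable section

open Matrix

variable {b d : ℕ}

/-- The finite-volume block matrix `P_n(θ)` with periodic boundary conditions:
diagonal blocks `V(θ+(n−j)ω)`, subdiagonal blocks `B(θ+(n−j)ω)`, superdiagonal blocks
`B(θ+(n−j)ω)*` (1-based `j`), and corner blocks `B(θ)` (top right) and `B(θ)*`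
(bottom left). -/
def Pmat (B V : (Fin b → ℝ) → Matrix (Fin d) (Fin d) ℂ) (ω : Fin b → ℝ) (n : ℕ)
    (θ : Fin b → ℝ) : Matrix (Fin n × Fin d) (Fin n × Fin d) ℂ := fun p q =>
  (if p.1 = q.1 then V (θ + ((n - 1 - (p.1 : ℕ) : ℕ) : ℝ) • ω) p.2 q.2 else 0)
  + (if (p.1 : ℕ) = (q.1 : ℕ) + 1 then B (θ + ((n - 1 - (q.1 : ℕ) : ℕ) : ℝ) • ω) p.2 q.2 else 0)
  + (if (q.1 : ℕ) = (p.1 : ℕ) + 1 then (B (θ + ((n - 1 - (p.1 : ℕ) : ℕ) : ℝ) • ω))ᴴ p.2 q.2 else 0)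
  + (if (p.1 : ℕ) = 0 ∧ (q.1 : ℕ) = n - 1 then B θ p.2 q.2 else 0)
  + (if (q.1 : ℕ) = 0 ∧ (p.1 : ℕ) = n - 1 then (B θ)ᴴ p.2 q.2 else 0)

/-- `f_{E,n}(θ) = det(P_n(θ) − E·I_{nd})`. -/
def fdet (B V : (Fin b → ℝ) → Matrix (Fin d) (Fin d) ℂ) (ω : Fin b → ℝ) (E : ℂ) (n : ℕ)
    (θ : Fin b → ℝ) : ℂ :=
  (Pmat B V ω n θ - E • (1 : Matrix (Fin n × Fin d) (Fin n × Fin d) ℂ)).det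

/-- The one-step transfer matrix `M_E(θ) = [[(E·I−V(θ))B(θ)⁻¹, −B(θ)*],[B(θ)⁻¹, 0]]`. -/
def Mtrans (B V : (Fin b → ℝ) → Matrix (Fin d) (Fin d) ℂ) (E : ℂ) (θ : Fin b → ℝ) :
    Matrix (Fin d ⊕ Fin d) (Fin d ⊕ Fin d) ℂ :=
  Matrix.fromBlocks ((E • (1 : Matrix (Fin d) (Fin d) ℂ) - V θ) * (B θ)⁻¹) (-((B θ)ᴴ))
    (B θ)⁻¹ 0

/-- The `n`-step transfer matrix `M_{n,E}(θ) = M_E(θ+(n−1)ω)···M_E(θ)`. -/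
def MtransN (B V : (Fin b → ℝ) → Matrix (Fin d) (Fin d) ℂ) (ω : Fin b → ℝ) (E : ℂ) :
    ℕ → (Fin b → ℝ) → Matrix (Fin d ⊕ Fin d) (Fin d ⊕ Fin d) ℂ
  | 0, _ => 1
  | n + 1, θ => MtransN B V ω E n (θ + ω) * Mtrans B V E θ

namespace AbsFdetAux

open Matrix

/-! ### Generic block-matrix lemmas -/

section Generic

variable {δ : Type*} [Fintype δ] [DecidableEq δ]

/-- partial product `g (t-1) * ⋯ * g 0`. -/
def prP (g : ℕ → Matrix δ δ ℂ) : ℕ → Matrix δ δ ℂ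
  | 0 => 1
  | t+1 => g t * prP g t

lemma prP_succ (g : ℕ → Matrix δ δ ℂ) (t : ℕ) : prP g (t+1) = g t * prP g t := rfl

lemma prP_shift (g : ℕ → Matrix δ δ ℂ) (t : ℕ) :
    prP g (t+1) = prP (fun s => g (s+1)) t * g 0 := by
  induction t with
  | zero => simp [prP]
  | succ t ih => rw [prP_succ, ih, prP_succ, ← Matrix.mul_assoc]

/-- The cyclic block matrix with identity diagonal blocks, `-g j` on the (block) subdiagonal,
and `-C` in the top-right corner. -/
def Kc (g : ℕ → Matrix δ δ ℂ) (C : Matrix δ δ ℂ) (n : ℕ) :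
    Matrix (Fin n × δ) (Fin n × δ) ℂ := fun p q =>
  (if p.1 = q.1 then (1 : Matrix δ δ ℂ) p.2 q.2 else 0)
  - (if (p.1 : ℕ) = (q.1 : ℕ) + 1 then g (q.1 : ℕ) p.2 q.2 else 0)
  - (if (p.1 : ℕ) = 0 ∧ (q.1 : ℕ) = n - 1 then C p.2 q.2 else 0)

def eOne (δ : Type*) : (Fin 1 × δ) ≃ δ where
  toFun := fun p => p.2
  invFun := fun a => (0, a)
  left_inv := fun p => Prod.ext (Subsingleton.elim _ _) rfl
  right_inv := fun a => rfl

/-- The splitting equivalence. -/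
def splitE (n : ℕ) (δ : Type*) : ((Fin n × δ) ⊕ δ) ≃ (Fin (n+1) × δ) where
  toFun := Sum.elim (fun p => (p.1.castSucc, p.2)) (fun a => (Fin.last n, a))
  invFun := fun p => if h : (p.1 : ℕ) < n then .inl (⟨p.1, h⟩, p.2) else .inr p.2
  left_inv := by
    rintro (⟨k, a⟩ | a)
    · have h : ((k.castSucc : Fin (n+1)) : ℕ) < n := by simpa using k.isLt
      simp only [Sum.elim_inl, dif_pos h]
      exact dif_pos h
    · have h : ¬ (((Fin.last n : Fin (n+1)) : ℕ) < n) := by simp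
      simp only [Sum.elim_inr, dif_neg h]
      exact dif_neg h
  right_inv := by
    rintro ⟨k, a⟩
    by_cases h : (k : ℕ) < n
    · simp [h]
    · have hk : (k : ℕ) = n := by have := k.isLt; omega
      simp [h, Fin.ext_iff, hk]

omit [Fintype δ] [DecidableEq δ] in
lemma splitE_inl (n : ℕ) (p : Fin n × δ) :
    splitE n δ (Sum.inl p) = (p.1.castSucc, p.2) := rfl

omit [Fintype δ] [DecidableEq δ] in
lemma splitE_inr (n : ℕ) (a : δ) : splitE n δ (Sum.inr a) = (Fin.last n, a) := rfl

lemma det_Kc (g : ℕ → Matrix δ δ ℂ) : ∀ n, 1 ≤ n → ∀ C : Matrix δ δ ℂ,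
    (Kc g C n).det = (1 - C * prP g (n-1)).det := by
  intro n hn
  induction n, hn using Nat.le_induction with
  | base =>
    intro C
    have hK : Kc g C 1 = ((1 : Matrix δ δ ℂ) - C).submatrix (eOne δ) (eOne δ) := by
      ext p q
      have h1 : p.1 = q.1 := Subsingleton.elim _ _
      have h2 : ¬ ((p.1 : ℕ) = (q.1 : ℕ) + 1) := by omega
      have h3 : (p.1 : ℕ) = 0 ∧ (q.1 : ℕ) = 0 := ⟨by omega, by omega⟩
      simp [Kc, h1, h2, h3, Matrix.sub_apply, eOne]
    rw [hK, det_submatrix_equiv_self]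
    simp [prP]
  | succ n hn ih =>
    intro C
    set Bb : Matrix (Fin n × δ) δ ℂ := fun p c => -(if (p.1 : ℕ) = 0 then C p.2 c else 0) with hBb
    set Cb : Matrix δ (Fin n × δ) ℂ :=
      fun c q => -(if n = (q.1 : ℕ) + 1 then g (q.1 : ℕ) c q.2 else 0) with hCb
    have hsub : (Kc g C (n+1)).submatrix (splitE n δ) (splitE n δ)
        = fromBlocks (Kc g 0 n) Bb Cb 1 := by
      ext p q
      rcases p with ⟨k, a⟩ | a <;> rcases q with ⟨j, b⟩ | b <;>
        rw [submatrix_apply] <;> simp only [splitE_inl, splitE_inr] <;>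
        simp only [Kc, fromBlocks_apply₁₁, fromBlocks_apply₁₂, fromBlocks_apply₂₁,
          fromBlocks_apply₂₂, Fin.coe_castSucc, Fin.val_last]
      · have hc : ¬ ((k : ℕ) = 0 ∧ (j : ℕ) = (n+1) - 1) := by have := j.isLt; omega
        have hc' : ((if (k : ℕ) = 0 ∧ (j : ℕ) = n - 1 then (0 : Matrix δ δ ℂ) a b else 0)) = 0 := by
          split <;> simp
        rw [hc', if_neg hc]
        simp [Fin.castSucc_inj]
      · have h1 : ¬ (k.castSucc = Fin.last n) := by
          rw [Fin.ext_iff]; simp only [Fin.coe_castSucc, Fin.val_last]; have := k.isLt; omega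
        have h2 : ¬ ((k : ℕ) = n + 1) := by have := k.isLt; omega
        rw [if_neg h1, if_neg h2]
        simp [hBb]
      · have h1 : ¬ ((Fin.last n : Fin (n+1)) = j.castSucc) := by
          rw [Fin.ext_iff]; simp only [Fin.coe_castSucc, Fin.val_last]; have := j.isLt; omega
        have h3 : ¬ ((n : ℕ) = 0 ∧ (j : ℕ) = (n+1) - 1) := by omega
        rw [if_neg h1, if_neg h3]
        simp [hCb]
      · have h2 : ¬ ((n : ℕ) = n + 1) := by omega
        have h3 : ¬ ((n : ℕ) = 0 ∧ (n : ℕ) = (n+1) - 1) := by omega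
        rw [if_neg h2, if_neg h3]
        simp [one_apply, Prod.ext_iff]
    have hdet1 : (Kc g C (n+1)).det = (Kc g 0 n - Bb * Cb).det := by
      rw [← det_submatrix_equiv_self (splitE n δ), hsub, det_fromBlocks_one₂₂]
    have hprod : Kc g 0 n - Bb * Cb = Kc g (C * g (n-1)) n := by
      ext p q
      have hBC : (Bb * Cb) p q
          = if (p.1 : ℕ) = 0 ∧ (q.1 : ℕ) = n - 1 then (C * g (n-1)) p.2 q.2 else 0 := by
        rw [mul_apply]
        by_cases h : (p.1 : ℕ) = 0 ∧ (q.1 : ℕ) = n - 1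
        · obtain ⟨h1, h2⟩ := h
          have h2' : n = (q.1 : ℕ) + 1 := by have := q.1.isLt; omega
          rw [if_pos ⟨h1, h2⟩, mul_apply]
          apply Finset.sum_congr rfl
          intro c _
          rw [hBb, hCb]
          simp only [if_pos h1, if_pos h2', neg_mul_neg]
          rw [h2]
        · rw [if_neg h]
          apply Finset.sum_eq_zero
          intro c _
          by_cases h1 : (p.1 : ℕ) = 0
          · have h2 : ¬ (n = (q.1 : ℕ) + 1) := by
              have := q.1.isLt; intro hh; exact h ⟨h1, by omega⟩
            simp [hBb, hCb, h1, h2]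
          · simp [hBb, h1]
      rw [Matrix.sub_apply, hBC]
      simp only [Kc]
      have : (if (p.1 : ℕ) = 0 ∧ (q.1 : ℕ) = n - 1 then (0 : Matrix δ δ ℂ) p.2 q.2 else 0) = 0 := by
        split <;> simp
      rw [this]
      ring
    rw [hdet1, hprod, ih]
    have : prP g (n + 1 - 1) = g (n-1) * prP g (n-1) := by
      rw [show n + 1 - 1 = (n-1) + 1 by omega, prP_succ]
    rw [this, ← Matrix.mul_assoc]

lemma fin_eq_add_one_iff {m : ℕ} (k j : Fin (m+1)) :
    k = j + 1 ↔ ((k : ℕ) = (j : ℕ) + 1 ∨ ((k : ℕ) = 0 ∧ (j : ℕ) = m)) := by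
  rw [Fin.ext_iff, Fin.val_add_one]
  split_ifs with h
  · subst h; simp [Fin.val_last]; omega
  · have : (j : ℕ) ≠ m := fun hh => h (Fin.ext (by simp [Fin.val_last, hh]))
    have := j.isLt; have := k.isLt
    constructor
    · intro h'; left; exact h'
    · rintro (h' | ⟨h1, h2⟩)
      · exact h'
      · omega

/-- cyclic lower shift matrix with blocks `g`: `1` on diagonal, `-g j` below (cyclically). -/
def Kmat (g : ℕ → Matrix δ δ ℂ) (m : ℕ) :
    Matrix (Fin (m+1) × δ) (Fin (m+1) × δ) ℂ := fun p q =>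
  (if p.1 = q.1 then (1 : Matrix δ δ ℂ) p.2 q.2 else 0)
  - (if p.1 = q.1 + 1 then g (q.1 : ℕ) p.2 q.2 else 0)

lemma Kmat_eq_Kc (g : ℕ → Matrix δ δ ℂ) (m : ℕ) : Kmat g m = Kc g (g m) (m+1) := by
  ext p q
  simp only [Kmat, Kc]
  have hiff := fin_eq_add_one_iff p.1 q.1
  by_cases h1 : (p.1 : ℕ) = (q.1 : ℕ) + 1
  · have hf : p.1 = q.1 + 1 := hiff.mpr (Or.inl h1)
    have hc : ¬((p.1 : ℕ) = 0 ∧ (q.1 : ℕ) = (m+1) - 1) := by omega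
    rw [if_pos hf, if_pos h1, if_neg hc]
    ring
  · by_cases h2 : (p.1 : ℕ) = 0 ∧ (q.1 : ℕ) = m
    · have hf : p.1 = q.1 + 1 := hiff.mpr (Or.inr h2)
      have hc : (p.1 : ℕ) = 0 ∧ (q.1 : ℕ) = (m+1) - 1 := by omega
      rw [if_pos hf, if_neg h1, if_pos hc, h2.2]
      ring
    · have hf : ¬(p.1 = q.1 + 1) := fun hh => by
        rcases hiff.mp hh with h | h
        · exact h1 h
        · exact h2 h
      have hc : ¬((p.1 : ℕ) = 0 ∧ (q.1 : ℕ) = (m+1) - 1) := by omega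
      rw [if_neg hf, if_neg h1, if_neg hc]
      ring

lemma det_Kmat (g : ℕ → Matrix δ δ ℂ) (m : ℕ) :
    (Kmat g m).det = (1 - prP g (m+1)).det := by
  rw [Kmat_eq_Kc, det_Kc g (m+1) (by omega)]
  have h1 : (m+1) - 1 = m := rfl
  rw [h1, prP_succ]

/-- block diagonal matrix with blocks `D k`, indexed by `Fin n × δ`. -/
def Dmat {n : ℕ} (D : Fin n → Matrix δ δ ℂ) : Matrix (Fin n × δ) (Fin n × δ) ℂ :=
  fun p q => if p.1 = q.1 then D p.1 p.2 q.2 else 0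

lemma Dmat_eq_bd {n : ℕ} (D : Fin n → Matrix δ δ ℂ) :
    Dmat D = (blockDiagonal D).submatrix (Equiv.prodComm (Fin n) δ) (Equiv.prodComm (Fin n) δ) := by
  ext ⟨k, a⟩ ⟨j, b⟩
  simp only [Dmat, submatrix_apply, Equiv.prodComm_apply, Prod.swap_prod_mk,
    blockDiagonal_apply]

lemma det_Dmat {n : ℕ} (D : Fin n → Matrix δ δ ℂ) : (Dmat D).det = ∏ k, (D k).det := by
  rw [Dmat_eq_bd, det_submatrix_equiv_self, det_blockDiagonal]

lemma Dmat_mul_Dmat {n : ℕ} (D D' : Fin n → Matrix δ δ ℂ) :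
    Dmat D * Dmat D' = Dmat (fun k => D k * D' k) := by
  rw [Dmat_eq_bd D, Dmat_eq_bd D', submatrix_mul_equiv, ← blockDiagonal_mul, ← Dmat_eq_bd]

lemma submatrix_fun_mul {T S : Type*} [Fintype T] [DecidableEq T] [Fintype S]
    (M N : Matrix T T ℂ) (e : S → T) :
    (M.submatrix e id) * N = (M * N).submatrix e id := by
  ext p q
  simp [mul_apply, submatrix_apply]

lemma mul_one_submatrix {T S : Type*} [Fintype T] [DecidableEq T] [Fintype S] [DecidableEq S]
    (M : Matrix S T ℂ) (e : T ≃ T) :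
    M * ((1 : Matrix T T ℂ).submatrix e id) = M.submatrix id e.symm := by
  ext p q
  rw [mul_apply]
  simp only [submatrix_apply, one_apply, id_eq, mul_ite, mul_one, mul_zero]
  simp only [Equiv.apply_eq_iff_eq_symm_apply]
  simp [Finset.sum_ite_eq']

/-- `Kmat` as `1` minus a shifted block diagonal. -/
lemma Kmat_eq_one_sub {m : ℕ} (g : ℕ → Matrix δ δ ℂ) (e : Equiv.Perm (Fin (m+1) × δ))
    (he : ∀ p, e p = (p.1 - 1, p.2)) :
    Kmat g m = 1 - (Dmat (fun k => g (k : ℕ))).submatrix e id := by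
  ext p q
  simp only [Kmat, Matrix.sub_apply, submatrix_apply, id_eq, he, Dmat]
  congr 1
  · rw [one_apply]
    by_cases h : p.1 = q.1
    · by_cases h2 : p.2 = q.2
      · have : p = q := Prod.ext h h2
        simp [this, h, h2, one_apply]
      · have : ¬(p = q) := fun hh => h2 (by rw [hh])
        simp [this, h, h2, one_apply]
    · have : ¬(p = q) := fun hh => h (by rw [hh])
      simp [this, h]
  · by_cases h : p.1 - 1 = q.1
    · have h' : p.1 = q.1 + 1 := by rw [← h]; rw [sub_add_cancel]
      rw [if_pos h, if_pos h', h]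
    · have h' : ¬(p.1 = q.1 + 1) := fun hh => h (by rw [hh]; rw [add_sub_cancel_right])
      rw [if_neg h, if_neg h']

end Generic

end AbsFdetAux

namespace AbsFdetAux

open Matrix

section Specific

variable {b d : ℕ} (B V : (Fin b → ℝ) → Matrix (Fin d) (Fin d) ℂ) (ω θ : Fin b → ℝ) (E : ℂ)
  {m : ℕ}

/-- shift `(k, a) ↦ (k+1, a)`. -/
def shAdd (m : ℕ) (δ : Type*) : Equiv.Perm (Fin (m+1) × δ) :=
  (Equiv.addRight (1 : Fin (m+1))).prodCongr (Equiv.refl δ)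

lemma shAdd_symm_apply {δ : Type*} (p : Fin (m+1) × δ) :
    (shAdd m δ).symm p = (p.1 - 1, p.2) := by
  rw [Equiv.symm_apply_eq]
  show p = (p.1 - 1 + 1, p.2)
  rw [sub_add_cancel]

def gM : ℕ → Matrix (Fin d ⊕ Fin d) (Fin d ⊕ Fin d) ℂ := fun t =>
  Mtrans B V E (θ + (t : ℝ) • ω)

def BfM (k : Fin (m+1)) : Matrix (Fin d) (Fin d) ℂ := B (θ + ((k : ℕ) : ℝ) • ω)

def AmatM (k : Fin (m+1)) : Matrix (Fin d) (Fin d) ℂ :=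
  V (θ + ((k : ℕ) : ℝ) • ω) - E • (1 : Matrix (Fin d) (Fin d) ℂ)

def CfM (k : Fin (m+1)) : Matrix (Fin d) (Fin d) ℂ := (BfM B ω θ k)ᴴ

def DfM (k : Fin (m+1)) : Matrix (Fin d ⊕ Fin d) (Fin d ⊕ Fin d) ℂ :=
  fromBlocks (BfM B ω θ k) 0 0 1

def YM (k : Fin (m+1)) : Matrix (Fin d ⊕ Fin d) (Fin d ⊕ Fin d) ℂ :=
  fromBlocks (-(AmatM V ω θ E k)) (-(CfM B ω θ k)) 1 0

def JM : Matrix (Fin (m+1) × Fin d) (Fin (m+1) × Fin d) ℂ := fun p q =>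
  (if p.1 = q.1 then AmatM V ω θ E p.1 p.2 q.2 else 0)
  + (if q.1 = p.1 + 1 then BfM B ω θ q.1 p.2 q.2 else 0)
  + (if p.1 = q.1 + 1 then CfM B ω θ p.1 p.2 q.2 else 0)

def G00M : Matrix (Fin (m+1) × Fin d) (Fin (m+1) × Fin d) ℂ := fun p q =>
  (if p.1 = q.1 then BfM B ω θ p.1 p.2 q.2 else 0)
  + (if p.1 - 1 = q.1 then AmatM V ω θ E (p.1 - 1) p.2 q.2 else 0)

def G01M : Matrix (Fin (m+1) × Fin d) (Fin (m+1) × Fin d) ℂ := fun p q =>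
  if p.1 - 1 = q.1 then CfM B ω θ (p.1 - 1) p.2 q.2 else 0

def G10M (m : ℕ) : Matrix (Fin (m+1) × Fin d) (Fin (m+1) × Fin d) ℂ := fun p q =>
  -(if p.1 - 1 = q.1 then (1 : Matrix (Fin d) (Fin d) ℂ) p.2 q.2 else 0)

lemma Mtrans_mul_DfM (hB : ∀ θ' : Fin b → ℝ, IsUnit (B θ').det) (k : Fin (m+1)) :
    Mtrans B V E (θ + ((k : ℕ) : ℝ) • ω) * DfM B ω θ k = YM B V ω θ E k := by
  unfold Mtrans DfM YM AmatM CfM BfM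
  rw [fromBlocks_multiply]
  simp only [Matrix.mul_zero, Matrix.zero_mul, Matrix.mul_one, add_zero, zero_add,
    nonsing_inv_mul_cancel_right _ _ (hB _), nonsing_inv_mul _ (hB _), neg_sub]

lemma KD_eq (hB : ∀ θ' : Fin b → ℝ, IsUnit (B θ').det) :
    Kmat (gM B V ω θ E) m * Dmat (DfM B ω θ)
      = Dmat (DfM B ω θ)
        - (Dmat (YM B V ω θ E)).submatrix ⇑(shAdd m (Fin d ⊕ Fin d)).symm id := by
  rw [Kmat_eq_one_sub (gM B V ω θ E) (shAdd m (Fin d ⊕ Fin d)).symm shAdd_symm_apply,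
    sub_mul, one_mul, submatrix_fun_mul, Dmat_mul_Dmat]
  have hfun : (fun k : Fin (m+1) => gM B V ω θ E (k : ℕ) * DfM B ω θ k) = YM B V ω θ E :=
    funext (fun k => Mtrans_mul_DfM B V ω θ E hB k)
  rw [hfun]

lemma KD_reindex (hB : ∀ θ' : Fin b → ℝ, IsUnit (B θ').det) :
    (Kmat (gM B V ω θ E) m * Dmat (DfM B ω θ)).submatrix
        ⇑(Equiv.prodSumDistrib (Fin (m+1)) (Fin d) (Fin d)).symm
        ⇑(Equiv.prodSumDistrib (Fin (m+1)) (Fin d) (Fin d)).symm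
      = fromBlocks (G00M B V ω θ E) (G01M B ω θ) (G10M m) 1 := by
  rw [KD_eq B V ω θ E hB]
  have e1 : ∀ (k : Fin (m+1)) (a : Fin d),
      (Equiv.prodSumDistrib (Fin (m+1)) (Fin d) (Fin d)).symm (Sum.inl (k, a))
        = (k, Sum.inl a) := fun _ _ => rfl
  have e2 : ∀ (k : Fin (m+1)) (a : Fin d),
      (Equiv.prodSumDistrib (Fin (m+1)) (Fin d) (Fin d)).symm (Sum.inr (k, a))
        = (k, Sum.inr a) := fun _ _ => rfl
  ext p q
  rcases p with ⟨k, a⟩ | ⟨k, a⟩ <;> rcases q with ⟨j, b⟩ | ⟨j, b⟩ <;>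
    rw [submatrix_apply] <;> simp only [e1, e2] <;>
    simp only [fromBlocks_apply₁₁, fromBlocks_apply₁₂, fromBlocks_apply₂₁, fromBlocks_apply₂₂,
      Matrix.sub_apply, Dmat, submatrix_apply, shAdd_symm_apply, id_eq, DfM, YM,
      G00M, G01M, G10M, Matrix.neg_apply]
  · split_ifs <;> ring
  · split_ifs <;> simp
  · split_ifs <;> simp
  · rw [one_apply]
    by_cases h : k = j
    · subst h
      by_cases h2 : a = b
      · subst h2; simp [one_apply]
      · simp [h2, one_apply, Prod.ext_iff]
    · simp [h, one_apply, Prod.ext_iff]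

lemma G10_eq :
    G10M (d := d) m = -((1 : Matrix (Fin (m+1) × Fin d) (Fin (m+1) × Fin d) ℂ).submatrix
      ⇑(shAdd m (Fin d)).symm id) := by
  ext ⟨k, a⟩ ⟨j, b⟩
  simp only [G10M, Matrix.neg_apply, submatrix_apply, shAdd_symm_apply, id_eq, one_apply, Prod.ext_iff]
  by_cases h : k - 1 = j
  · by_cases h2 : a = b <;> simp [h, h2]
  · simp [h]

lemma G10_mul_u :
    G10M (d := d) m * ((1 : Matrix (Fin (m+1) × Fin d) (Fin (m+1) × Fin d) ℂ).submatrix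
      ⇑(shAdd m (Fin d)) id) + 1 = 0 := by
  rw [G10_eq, Matrix.neg_mul, mul_one_submatrix, submatrix_submatrix]
  rw [show ⇑(shAdd m (Fin d)).symm ∘ id = ⇑(shAdd m (Fin d)).symm from rfl,
    show id ∘ ⇑(shAdd m (Fin d)).symm = ⇑(shAdd m (Fin d)).symm from rfl]
  rw [submatrix_one_equiv]
  exact neg_add_cancel 1

lemma Z_eq :
    G00M B V ω θ E * ((1 : Matrix (Fin (m+1) × Fin d) (Fin (m+1) × Fin d) ℂ).submatrix
        ⇑(shAdd m (Fin d)) id) + G01M B ω θ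
      = (JM B V ω θ E).submatrix ⇑(shAdd m (Fin d)).symm ⇑(shAdd m (Fin d)).symm := by
  rw [mul_one_submatrix]
  ext ⟨k, a⟩ ⟨j, b⟩
  show G00M B V ω θ E (k, a) ((shAdd m (Fin d)).symm (j, b)) + G01M B ω θ (k, a) (j, b) = _
  simp only [shAdd_symm_apply, submatrix_apply, G00M, G01M, JM]
  simp only [sub_add_cancel]
  by_cases h : k = j - 1
  · subst h
    simp only [if_pos rfl]
    ring
  · rw [if_neg h, if_neg (show ¬(j - 1 = k) from fun hh => h hh.symm)]
    ring

lemma prP_eq_MtransN : ∀ (t : ℕ) (θ' : Fin b → ℝ),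
    prP (gM B V ω θ' E) t = MtransN B V ω E t θ' := by
  intro t
  induction t with
  | zero => intro θ'; rfl
  | succ t ih =>
    intro θ'
    show prP (gM B V ω θ' E) (t+1) = MtransN B V ω E t (θ' + ω) * Mtrans B V E θ'
    rw [← ih (θ' + ω), prP_shift]
    congr 1
    · apply congrArg (fun gg => prP gg t)
      funext s
      show Mtrans B V E (θ' + ((s+1 : ℕ) : ℝ) • ω) = Mtrans B V E ((θ' + ω) + (s : ℝ) • ω)
      congr 1
      push_cast
      rw [add_smul, one_smul]
      abel
    · show Mtrans B V E (θ' + ((0 : ℕ) : ℝ) • ω) = Mtrans B V E θ'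
      norm_num

/-- The reversal permutation. -/
def revE (m : ℕ) (d : ℕ) : Equiv.Perm (Fin (m+1) × Fin d) :=
  (Fin.revPerm).prodCongr (Equiv.refl (Fin d))

lemma Pmat_eq : Pmat B V ω (m+1) θ - E • 1 = (JM B V ω θ E).submatrix ⇑(revE m d) ⇑(revE m d) := by
  have hrev : ∀ i : Fin (m+1), ((Fin.rev i : Fin (m+1)) : ℕ) = m - (i : ℕ) := by
    intro i; rw [Fin.val_rev]; omega
  ext ⟨p, a⟩ ⟨q, b⟩
  have happ : ∀ (i : Fin (m+1)) (c : Fin d), revE m d (i, c) = (i.rev, c) := fun _ _ => rfl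
  rw [submatrix_apply, happ, happ]
  show Pmat B V ω (m+1) θ (p, a) (q, b) - (E • (1 : Matrix (Fin (m+1) × Fin d) (Fin (m+1) × Fin d) ℂ)) (p, a) (q, b) = _
  simp only [Pmat, JM, Matrix.smul_apply, one_apply, smul_eq_mul]
  have eqA : (if p = q then V (θ + (((m+1) - 1 - (p : ℕ) : ℕ) : ℝ) • ω) a b else 0)
        - E * (if ((p : Fin (m+1)), a) = (q, b) then (1:ℂ) else 0)
      = (if p.rev = q.rev then AmatM V ω θ E p.rev a b else 0) := by
    by_cases h : p = q
    · subst h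
      simp only [if_pos rfl, Prod.mk.injEq, true_and, AmatM, Matrix.sub_apply, Matrix.smul_apply, one_apply,
        smul_eq_mul, hrev]
      rw [show (m + 1) - 1 - (p : ℕ) = m - (p : ℕ) by omega]
      split_ifs <;> ring
    · have h' : ¬(p.rev = q.rev) := fun hh => h (Fin.rev_injective hh)
      have h'' : ¬(((p : Fin (m+1)), a) = (q, b)) := fun hh => h (congrArg Prod.fst hh)
      simp [h, h', h'']
  have eqB : (if (p : ℕ) = (q : ℕ) + 1 then B (θ + (((m+1) - 1 - (q : ℕ) : ℕ) : ℝ) • ω) a b else 0)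
        + (if (p : ℕ) = 0 ∧ (q : ℕ) = (m+1) - 1 then B θ a b else 0)
      = (if q.rev = p.rev + 1 then BfM B ω θ q.rev a b else 0) := by
    by_cases h2 : (p : ℕ) = (q : ℕ) + 1
    · have hc : q.rev = p.rev + 1 := by
        rw [fin_eq_add_one_iff, hrev, hrev]
        left
        have := p.isLt; have := q.isLt; omega
      have h4 : ¬((p : ℕ) = 0 ∧ (q : ℕ) = (m+1) - 1) := by omega
      rw [if_pos h2, if_neg h4, if_pos hc, add_zero]
      unfold BfM
      rw [hrev, show (m + 1) - 1 - (q : ℕ) = m - (q : ℕ) by omega]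
    · by_cases h4 : (p : ℕ) = 0 ∧ (q : ℕ) = (m+1) - 1
      · have hc : q.rev = p.rev + 1 := by
          rw [fin_eq_add_one_iff, hrev, hrev]
          right
          constructor <;> omega
        rw [if_neg h2, if_pos h4, if_pos hc, zero_add]
        unfold BfM
        rw [hrev, show m - (q : ℕ) = 0 by omega]
        norm_num
      · have hc : ¬(q.rev = p.rev + 1) := by
          rw [fin_eq_add_one_iff, hrev, hrev]
          push_neg
          have := p.isLt; have := q.isLt
          constructor <;> omega
        rw [if_neg h2, if_neg h4, if_neg hc, add_zero]
  have eqC : (if (q : ℕ) = (p : ℕ) + 1 then (B (θ + (((m+1) - 1 - (p : ℕ) : ℕ) : ℝ) • ω))ᴴ a b else 0)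
        + (if (q : ℕ) = 0 ∧ (p : ℕ) = (m+1) - 1 then (B θ)ᴴ a b else 0)
      = (if p.rev = q.rev + 1 then CfM B ω θ p.rev a b else 0) := by
    by_cases h2 : (q : ℕ) = (p : ℕ) + 1
    · have hc : p.rev = q.rev + 1 := by
        rw [fin_eq_add_one_iff, hrev, hrev]
        left
        have := p.isLt; have := q.isLt; omega
      have h4 : ¬((q : ℕ) = 0 ∧ (p : ℕ) = (m+1) - 1) := by omega
      rw [if_pos h2, if_neg h4, if_pos hc, add_zero]
      unfold CfM BfM
      rw [hrev, show (m + 1) - 1 - (p : ℕ) = m - (p : ℕ) by omega]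
    · by_cases h4 : (q : ℕ) = 0 ∧ (p : ℕ) = (m+1) - 1
      · have hc : p.rev = q.rev + 1 := by
          rw [fin_eq_add_one_iff, hrev, hrev]
          right
          constructor <;> omega
        rw [if_neg h2, if_pos h4, if_pos hc, zero_add]
        unfold CfM BfM
        rw [hrev, show m - (p : ℕ) = 0 by omega]
        norm_num
      · have hc : ¬(p.rev = q.rev + 1) := by
          rw [fin_eq_add_one_iff, hrev, hrev]
          push_neg
          have := p.isLt; have := q.isLt
          constructor <;> omega
        rw [if_neg h2, if_neg h4, if_neg hc, add_zero]
  linear_combination eqA + eqB + eqC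

end Specific

end AbsFdetAux

set_option maxHeartbeats 2000000 in
/-- `|f_{E,n}(θ)| = |det(M_{n,E}(θ) − I_{2d})| · ∏_{j=0}^{n−1} |det B(θ+jω)|`. -/
theorem abs_fdet_eq (hb : 1 ≤ b) (hd : 1 ≤ d)
    (B V : (Fin b → ℝ) → Matrix (Fin d) (Fin d) ℂ)
    (hB : ∀ θ : Fin b → ℝ, IsUnit (B θ).det)
    (θ ω : Fin b → ℝ) (E : ℂ) (n : ℕ) (hn : 1 ≤ n) :
    ‖fdet B V ω E n θ‖
      = ‖(MtransN B V ω E n θ - 1).det‖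
        * ∏ j ∈ Finset.range n, ‖(B (θ + (j : ℝ) • ω)).det‖ := by
  obtain ⟨m, rfl⟩ : ∃ m, n = m + 1 := ⟨n - 1, by omega⟩
  open AbsFdetAux in
  -- notation
  set sm := (shAdd m (Fin d)).symm with hsm
  set u := ((1 : Matrix (Fin (m+1) × Fin d) (Fin (m+1) × Fin d) ℂ).submatrix
    ⇑(shAdd m (Fin d)) id) with hu
  set FB := fromBlocks (G00M B V ω θ E) (G01M B ω θ) (G10M m)
    (1 : Matrix (Fin (m+1) × Fin d) (Fin (m+1) × Fin d) ℂ) with hFB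
  set U := fromBlocks (1 : Matrix (Fin (m+1) × Fin d) (Fin (m+1) × Fin d) ℂ) u
    (0 : Matrix (Fin (m+1) × Fin d) (Fin (m+1) × Fin d) ℂ)
    (1 : Matrix (Fin (m+1) × Fin d) (Fin (m+1) × Fin d) ℂ) with hU
  set Z := (JM B V ω θ E).submatrix ⇑sm ⇑sm with hZdef
  set Sw := fromBlocks (0 : Matrix (Fin (m+1) × Fin d) (Fin (m+1) × Fin d) ℂ)
    (1 : Matrix (Fin (m+1) × Fin d) (Fin (m+1) × Fin d) ℂ)
    (1 : Matrix (Fin (m+1) × Fin d) (Fin (m+1) × Fin d) ℂ)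
    (0 : Matrix (Fin (m+1) × Fin d) (Fin (m+1) × Fin d) ℂ) with hSw
  -- step 1: the determinant of K * D
  have hdetKD : (Kmat (gM B V ω θ E) m * Dmat (DfM B ω θ)).det
      = (1 - MtransN B V ω E (m+1) θ).det * ∏ k : Fin (m+1), (BfM B ω θ k).det := by
    rw [det_mul, det_Kmat, prP_eq_MtransN, det_Dmat]
    congr 1
    apply Finset.prod_congr rfl
    intro k _
    show (fromBlocks (BfM B ω θ k) 0 0 1).det = _
    rw [det_fromBlocks_zero₂₁, det_one, mul_one]
  -- step 2
  have hdetFB : FB.det = (Kmat (gM B V ω θ E) m * Dmat (DfM B ω θ)).det := by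
    rw [hFB, ← KD_reindex B V ω θ E hB, det_submatrix_equiv_self]
  -- step 3
  have hFBU : FB * U = fromBlocks (G00M B V ω θ E) Z (G10M m) 0 := by
    rw [hFB, hU, fromBlocks_multiply]
    simp only [Matrix.mul_one, Matrix.mul_zero, Matrix.one_mul, Matrix.zero_mul,
      add_zero, zero_add]
    rw [Z_eq, G10_mul_u]
  have hdetU : U.det = 1 := by
    rw [hU, det_fromBlocks_zero₂₁, det_one, one_mul]
  -- step 5
  have hswap : fromBlocks (G00M B V ω θ E) Z (G10M m) 0
      = fromBlocks Z (G00M B V ω θ E) 0 (G10M m) * Sw := by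
    rw [hSw, fromBlocks_multiply]
    simp only [Matrix.mul_zero, Matrix.mul_one, Matrix.zero_mul, add_zero, zero_add]
  -- step 7 : |det Sw| = 1
  have habsSw : ‖Sw.det‖ = 1 := by
    have h2 : Sw * Sw = 1 := by
      rw [hSw, fromBlocks_multiply]
      simp only [Matrix.mul_zero, Matrix.mul_one, Matrix.zero_mul, add_zero, zero_add,
        Matrix.one_mul]
      exact fromBlocks_one
    have h3 : Sw.det * Sw.det = 1 := by rw [← det_mul, h2, det_one]
    have h4 : ‖Sw.det‖ * ‖Sw.det‖ = 1 := by
      rw [← norm_mul, h3, norm_one]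
    nlinarith [norm_nonneg Sw.det]
  -- step 8 : |det G10| = 1
  have habsG10 : ‖(G10M (d := d) m).det‖ = 1 := by
    rw [G10_eq, Matrix.det_neg, det_permute]
    rcases Int.units_eq_one_or (Equiv.Perm.sign (shAdd m (Fin d)).symm) with h | h <;>
      rw [h] <;> simp
  -- chain for FB.det
  have hchain : Z.det * (G10M (d := d) m).det * Sw.det = FB.det := by
    calc Z.det * (G10M (d := d) m).det * Sw.det
        = (fromBlocks Z (G00M B V ω θ E) 0 (G10M m)).det * Sw.det := by
          rw [det_fromBlocks_zero₂₁]
      _ = (fromBlocks (G00M B V ω θ E) Z (G10M m) 0).det := by rw [← det_mul, ← hswap]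
      _ = (FB * U).det := by rw [hFBU]
      _ = FB.det := by rw [det_mul, hdetU, mul_one]
  -- identify fdet with det Z
  have hfdet : fdet B V ω E (m+1) θ = Z.det := by
    show (Pmat B V ω (m+1) θ - E • 1).det = Z.det
    rw [Pmat_eq B V ω θ E, hZdef, det_submatrix_equiv_self, det_submatrix_equiv_self]
  -- take absolute values
  have habs : ‖Z.det‖
      = ‖(1 - MtransN B V ω E (m+1) θ).det‖
        * ∏ k : Fin (m+1), ‖(BfM B ω θ k).det‖ := by
    have h1 := congrArg (fun x : ℂ => ‖x‖) hchain
    rw [norm_mul, norm_mul, habsSw, habsG10, mul_one, mul_one, hdetFB, hdetKD, norm_mul,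
      norm_prod] at h1
    exact h1
  rw [hfdet, habs]
  congr 1
  · -- |det(1 - Π)| = |det(Π - 1)|
    have : MtransN B V ω E (m+1) θ - 1 = -(1 - MtransN B V ω E (m+1) θ) := by rw [neg_sub]
    rw [this, Matrix.det_neg, norm_mul, norm_pow]
    simp
  · rw [← Fin.prod_univ_eq_prod_range (fun j => ‖(B (θ + (j : ℝ) • ω)).det‖) (m+1)]
    rfl
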